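/- Let (a_k)_{k≥1} be a sequence of nonnegative real numbers such that ∑_{k=1}^∞ a_k / λ₀^k < ∞ for some λ₀ > 0. Define N((a_k)) = (1/2) · inf { λ > 0 : ∑_{k=1}^∞ a_k / λ^k ≤ 1 }. Then N satisfies the triangle inequality: N((a_k + b_k)) ≤ N((a_k)) + N((b_k)) for any two such sequences (a_k), (b_k). -/
import Mathlib

/-- The defining set of the Gross–Pitaevskii quasi-norm of a sequence `(a_k)_{k ≥ 1}`
(indexed here by `a (k+1)`, `k : ℕ`): the set of `λ > 0` with `∑_{k≥1} a_k / λ^k ≤ 1`. -/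
def gpSet (a : ℕ → ℝ) : Set ℝ :=
  {l : ℝ | 0 < l ∧ Summable (fun k : ℕ => a (k + 1) / l ^ (k + 1)) ∧
    ∑' k : ℕ, a (k + 1) / l ^ (k + 1) ≤ 1}

/-- The Gross–Pitaevskii quasi-norm `N((a_k)) = (1/2)·inf { λ > 0 : ∑_{k≥1} a_k/λ^k ≤ 1 }`. -/
noncomputable def gpNorm (a : ℕ → ℝ) : ℝ := (1 / 2) * sInf (gpSet a)

lemma gp_key (a : ℕ → ℝ) (ha : ∀ k, 0 ≤ a k) {l L : ℝ} (hl : 0 < l) (hL : l ≤ L)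
    (hs : Summable fun k : ℕ => a (k + 1) / l ^ (k + 1)) :
    Summable (fun k : ℕ => a (k + 1) / L ^ (k + 1)) ∧
    ∑' k : ℕ, a (k + 1) / L ^ (k + 1) ≤ (l / L) * ∑' k : ℕ, a (k + 1) / l ^ (k + 1) := by
  have hL0 : 0 < L := hl.trans_le hL
  have hq0 : 0 ≤ l / L := by positivity
  have hq1 : l / L ≤ 1 := (div_le_one hL0).2 hL
  have hpt : ∀ k : ℕ, a (k + 1) / L ^ (k + 1) ≤ (l / L) * (a (k + 1) / l ^ (k + 1)) := by
    intro k
    have heq : a (k + 1) / L ^ (k + 1) = (a (k + 1) / l ^ (k + 1)) * (l / L) ^ (k + 1) := by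
      rw [div_pow]
      field_simp
    rw [heq]
    have hpow : (l / L) ^ (k + 1) ≤ (l / L) ^ 1 :=
      pow_le_pow_of_le_one hq0 hq1 (by omega)
    calc (a (k + 1) / l ^ (k + 1)) * (l / L) ^ (k + 1)
        ≤ (a (k + 1) / l ^ (k + 1)) * (l / L) ^ 1 := by
          apply mul_le_mul_of_nonneg_left hpow (div_nonneg (ha _) (by positivity))
      _ = (l / L) * (a (k + 1) / l ^ (k + 1)) := by ring
  have hnn : ∀ k : ℕ, 0 ≤ a (k + 1) / L ^ (k + 1) := fun k => div_nonneg (ha _) (by positivity)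
  have hsum : Summable (fun k : ℕ => a (k + 1) / L ^ (k + 1)) :=
    Summable.of_nonneg_of_le hnn hpt ((hs.mul_left (l / L)))
  refine ⟨hsum, ?_⟩
  calc ∑' k : ℕ, a (k + 1) / L ^ (k + 1)
      ≤ ∑' k : ℕ, (l / L) * (a (k + 1) / l ^ (k + 1)) :=
        Summable.tsum_le_tsum hpt hsum (hs.mul_left _)
    _ = (l / L) * ∑' k : ℕ, a (k + 1) / l ^ (k + 1) := tsum_mul_left

lemma gp_nonempty (a : ℕ → ℝ) (ha : ∀ k, 0 ≤ a k)
    (hsa : ∃ l : ℝ, 0 < l ∧ Summable (fun k : ℕ => a (k + 1) / l ^ (k + 1))) :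
    (gpSet a).Nonempty := by
  obtain ⟨l, hl, hs⟩ := hsa
  set S := ∑' k : ℕ, a (k + 1) / l ^ (k + 1) with hS
  have hS0 : 0 ≤ S := tsum_nonneg fun k => div_nonneg (ha _) (by positivity)
  set L := l * (S + 1) with hLdef
  have hL0 : 0 < L := by positivity
  have hlL : l ≤ L := by nlinarith
  obtain ⟨hsum, hle⟩ := gp_key a ha hl hlL hs
  refine ⟨L, hL0, hsum, hle.trans ?_⟩
  have : l / L = 1 / (S + 1) := by
    rw [hLdef]; field_simp
  rw [this]
  rw [div_mul_eq_mul_div, one_mul, div_le_one (by linarith)]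
  linarith

lemma gp_mem_add (a b : ℕ → ℝ) (ha : ∀ k, 0 ≤ a k) (hb : ∀ k, 0 ≤ b k)
    {x y : ℝ} (hx : x ∈ gpSet a) (hy : y ∈ gpSet b) :
    x + y ∈ gpSet (fun k => a k + b k) := by
  obtain ⟨hx0, hxs, hxl⟩ := hx
  obtain ⟨hy0, hys, hyl⟩ := hy
  have hxy : 0 < x + y := by linarith
  obtain ⟨hsa, hla⟩ := gp_key a ha hx0 (by linarith : x ≤ x + y) hxs
  obtain ⟨hsb, hlb⟩ := gp_key b hb hy0 (by linarith : y ≤ x + y) hys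
  have heq : ∀ k : ℕ, (a (k + 1) + b (k + 1)) / (x + y) ^ (k + 1)
      = a (k + 1) / (x + y) ^ (k + 1) + b (k + 1) / (x + y) ^ (k + 1) := by
    intro k; ring
  have hsum : Summable (fun k : ℕ => (a (k + 1) + b (k + 1)) / (x + y) ^ (k + 1)) := by
    simpa only [heq] using hsa.add hsb
  refine ⟨hxy, hsum, ?_⟩
  have htsum : ∑' k : ℕ, (a (k + 1) + b (k + 1)) / (x + y) ^ (k + 1)
      = (∑' k : ℕ, a (k + 1) / (x + y) ^ (k + 1)) + ∑' k : ℕ, b (k + 1) / (x + y) ^ (k + 1) := by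
    simp only [heq]
    exact Summable.tsum_add hsa hsb
  rw [htsum]
  have hSa0 : 0 ≤ ∑' k : ℕ, a (k + 1) / x ^ (k + 1) := tsum_nonneg fun k => div_nonneg (ha _) (by positivity)
  have hSb0 : 0 ≤ ∑' k : ℕ, b (k + 1) / y ^ (k + 1) := tsum_nonneg fun k => div_nonneg (hb _) (by positivity)
  have h1 : ∑' k : ℕ, a (k + 1) / (x + y) ^ (k + 1) ≤ x / (x + y) := by
    refine hla.trans ?_
    have : x / (x + y) * (∑' k : ℕ, a (k + 1) / x ^ (k + 1)) ≤ x / (x + y) * 1 :=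
      mul_le_mul_of_nonneg_left hxl (by positivity)
    simpa using this
  have h2 : ∑' k : ℕ, b (k + 1) / (x + y) ^ (k + 1) ≤ y / (x + y) := by
    refine hlb.trans ?_
    have : y / (x + y) * (∑' k : ℕ, b (k + 1) / y ^ (k + 1)) ≤ y / (x + y) * 1 :=
      mul_le_mul_of_nonneg_left hyl (by positivity)
    simpa using this
  have : x / (x + y) + y / (x + y) = 1 := by field_simp
  linarith

/-- For nonnegative sequences with `∑_k a_k/λ₀^k < ∞` for some `λ₀ > 0`,
the quantity `N` satisfies the triangle inequality `N(a + b) ≤ N(a) + N(b)`. -/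
theorem stmt3 (a b : ℕ → ℝ) (ha : ∀ k, 0 ≤ a k) (hb : ∀ k, 0 ≤ b k)
    (hsa : ∃ l : ℝ, 0 < l ∧ Summable (fun k : ℕ => a (k + 1) / l ^ (k + 1)))
    (hsb : ∃ l : ℝ, 0 < l ∧ Summable (fun k : ℕ => b (k + 1) / l ^ (k + 1))) :
    gpNorm (fun k => a k + b k) ≤ gpNorm a + gpNorm b := by
  have hna : (gpSet a).Nonempty := gp_nonempty a ha hsa
  have hnb : (gpSet b).Nonempty := gp_nonempty b hb hsb
  have hbdd : BddBelow (gpSet (fun k => a k + b k)) :=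
    ⟨0, fun z hz => hz.1.le⟩
  have key : sInf (gpSet (fun k => a k + b k)) ≤ sInf (gpSet a) + sInf (gpSet b) := by
    have h1 : ∀ x ∈ gpSet a, ∀ y ∈ gpSet b,
        sInf (gpSet (fun k => a k + b k)) ≤ x + y := fun x hx y hy =>
      csInf_le hbdd (gp_mem_add a b ha hb hx hy)
    have h2 : ∀ y ∈ gpSet b, sInf (gpSet (fun k => a k + b k)) - y ≤ sInf (gpSet a) := by
      intro y hy
      refine le_csInf hna fun x hx => ?_
      linarith [h1 x hx y hy]
    have h3 : sInf (gpSet (fun k => a k + b k)) - sInf (gpSet a) ≤ sInf (gpSet b) := by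
      refine le_csInf hnb fun y hy => ?_
      linarith [h2 y hy]
    linarith
  unfold gpNorm
  linarith
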